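/- If some point V ∈ S has degree n−1 in the underlying graph of S (i.e., VQ is a halving line for every Q ∈ S with Q ≠ V), then the underlying graph of S is the star K_{1,n−1}: every point of S other than V has degree exactly 1, its unique neighbor being V. -/

import Mathlib

/-- Planar cross product (signed area determinant) of two vectors in `ℝ × ℝ`. -/
def det2 (u v : ℝ × ℝ) : ℝ := u.1 * v.2 - u.2 * v.1

/-- Dot product of two vectors in `ℝ × ℝ`. -/
def dot2 (u v : ℝ × ℝ) : ℝ := u.1 * v.1 + u.2 * v.2

/-- A finite set of points of the plane is in general position if no three
distinct points of it are collinear. -/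
def GenPos (S : Finset (ℝ × ℝ)) : Prop :=
  ∀ P ∈ S, ∀ Q ∈ S, ∀ R ∈ S, P ≠ Q → P ≠ R → Q ≠ R →
    ¬ Collinear ℝ ({P, Q, R} : Set (ℝ × ℝ))

/-- The line through the two distinct points `P, Q ∈ S` is a halving line of `S`:
each of the two open half-planes it determines contains exactly
`(S.card - 2) / 2` points of `S`. -/
def IsHalving (S : Finset (ℝ × ℝ)) (P Q : ℝ × ℝ) : Prop :=
  P ∈ S ∧ Q ∈ S ∧ P ≠ Q ∧
  {X ∈ (S : Set (ℝ × ℝ)) | 0 < det2 (Q - P) (X - P)}.ncard = (S.card - 2) / 2 ∧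
  {X ∈ (S : Set (ℝ × ℝ)) | det2 (Q - P) (X - P) < 0}.ncard = (S.card - 2) / 2

/-- Degree of a point in the underlying graph of `S`: the number of points `Q`
such that the line `PQ` is a halving line of `S`. -/
noncomputable def hdeg (S : Finset (ℝ × ℝ)) (P : ℝ × ℝ) : ℕ :=
  {Q : ℝ × ℝ | IsHalving S P Q}.ncard

/-- The number of halving lines of `S`, counted as unordered pairs of points. -/
noncomputable def numHalvingLines (S : Finset (ℝ × ℝ)) : ℕ :=
  {e : Finset (ℝ × ℝ) | ∃ P Q : ℝ × ℝ, e = {P, Q} ∧ IsHalving S P Q}.ncard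

/-- The underlying graph of `S`: vertices are the points of `S`, and two points
are adjacent exactly when the line through them is a halving line of `S`. -/
def underlyingGraph (S : Finset (ℝ × ℝ)) : SimpleGraph {x : ℝ × ℝ // x ∈ S} where
  Adj P Q := IsHalving S P.1 Q.1 ∧ IsHalving S Q.1 P.1
  symm := ⟨fun _ _ h => ⟨h.2, h.1⟩⟩
  loopless := ⟨fun _ h => h.1.2.2.1 rfl⟩


/-! ### Auxiliary lemmas for `stmt_8` -/

lemma dot2_self_pos (u : ℝ × ℝ) (h : u ≠ 0) : 0 < dot2 u u := by
  have h' : u.1 ≠ 0 ∨ u.2 ≠ 0 := by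
    by_contra hc; push_neg at hc; exact h (Prod.ext hc.1 hc.2)
  simp only [dot2]
  rcases h' with h1 | h1 <;>
    nlinarith [mul_self_nonneg u.1, mul_self_nonneg u.2, mul_self_pos.2 h1]

lemma collinear_of_det2 (P Q R : ℝ × ℝ) (hPQ : Q - P ≠ 0)
    (h : det2 (Q - P) (R - P) = 0) : Collinear ℝ ({P, Q, R} : Set (ℝ × ℝ)) := by
  have hd : dot2 (Q - P) (Q - P) ≠ 0 := ne_of_gt (dot2_self_pos _ hPQ)
  refine (collinear_iff_of_mem (Set.mem_insert P _)).2 ⟨Q - P, ?_⟩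
  intro p hp
  rcases hp with rfl | rfl | rfl
  · exact ⟨0, by simp⟩
  · exact ⟨1, by simp⟩
  · refine ⟨dot2 (Q - P) (p - P) / dot2 (Q - P) (Q - P), ?_⟩
    simp only [det2, dot2, Prod.fst_sub, Prod.snd_sub] at h hd
    refine Prod.ext ?_ ?_ <;>
      simp only [vadd_eq_add, Prod.fst_add, Prod.snd_add, Prod.smul_fst, Prod.smul_snd,
        smul_eq_mul, dot2, Prod.fst_sub, Prod.snd_sub]
    · rw [div_mul_eq_mul_div, div_add' _ _ _ hd, eq_div_iff hd]
      linear_combination (-(Q.2 - P.2)) * h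
    · rw [div_mul_eq_mul_div, div_add' _ _ _ hd, eq_div_iff hd]
      linear_combination (Q.1 - P.1) * h

lemma det2_flip (P Q X : ℝ × ℝ) : det2 (P - Q) (X - Q) = - det2 (Q - P) (X - P) := by
  simp only [det2, Prod.fst_sub, Prod.snd_sub]; ring

lemma isHalving_symm {S : Finset (ℝ × ℝ)} {P Q : ℝ × ℝ} (h : IsHalving S P Q) :
    IsHalving S Q P := by
  obtain ⟨hP, hQ, hne, h1, h2⟩ := h
  refine ⟨hQ, hP, hne.symm, ?_, ?_⟩
  · rw [show {X ∈ (S : Set (ℝ × ℝ)) | 0 < det2 (P - Q) (X - Q)}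
        = {X ∈ (S : Set (ℝ × ℝ)) | det2 (Q - P) (X - P) < 0} by
      ext X; simp [det2_flip P Q X, neg_pos]]
    exact h2
  · rw [show {X ∈ (S : Set (ℝ × ℝ)) | det2 (P - Q) (X - Q) < 0}
        = {X ∈ (S : Set (ℝ × ℝ)) | 0 < det2 (Q - P) (X - P)} by
      ext X; simp [det2_flip P Q X, neg_neg]]
    exact h1

lemma ncard_filter (S : Finset (ℝ × ℝ)) (p : ℝ × ℝ → Prop) [DecidablePred p] :
    {X ∈ (S : Set (ℝ × ℝ)) | p X}.ncard = (S.filter p).card := by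
  rw [← Set.ncard_coe_finset]; congr 1; ext x; simp

/-- Key lemma: under the star hypothesis, no open half-plane bounded by a line
through `V` can contain `(n-2)/2 + 2` points of `S`. -/
lemma key_halfplane (S : Finset (ℝ × ℝ)) (hgp : GenPos S) (V : ℝ × ℝ) (hV : V ∈ S)
    (hstar : ∀ Q ∈ S, Q ≠ V → IsHalving S V Q) (e : ℝ × ℝ) (he : e ≠ 0)
    (hcard : (S.card - 2) / 2 + 2 ≤
      (S.filter (fun X => det2 e (X - V) < 0)).card) : False := by
  classical
  set T := S.filter (fun X => det2 e (X - V) < 0) with hTdef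
  have hTne : T.Nonempty := Finset.card_pos.1 (by omega)
  obtain ⟨P, hPT, hmax⟩ :=
    T.exists_max_image (fun X => dot2 e (X - V) / det2 e (X - V)) hTne
  have hPS : P ∈ S := (Finset.mem_filter.1 hPT).1
  have hbP : det2 e (P - V) < 0 := (Finset.mem_filter.1 hPT).2
  have hPV : P ≠ V := by
    rintro rfl; simp [det2] at hbP
  have hhalf := hstar P hPS hPV
  have hG : (S.filter (fun X => 0 < det2 (P - V) (X - V))).card = (S.card - 2) / 2 := by
    rw [← ncard_filter]; exact hhalf.2.2.2.1
  have hsub : T.erase P ⊆ S.filter (fun X => 0 < det2 (P - V) (X - V)) := by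
    intro X hX
    have hXP : X ≠ P := (Finset.mem_erase.1 hX).1
    have hXT : X ∈ T := (Finset.mem_erase.1 hX).2
    have hXS : X ∈ S := (Finset.mem_filter.1 hXT).1
    have hbX : det2 e (X - V) < 0 := (Finset.mem_filter.1 hXT).2
    have hXV : X ≠ V := by rintro rfl; simp [det2] at hbX
    have hne0 : det2 (P - V) (X - V) ≠ 0 := by
      intro h0
      exact hgp V hV P hPS X hXS hPV.symm hXV.symm (Ne.symm hXP)
        (collinear_of_det2 V P X (sub_ne_zero.2 hPV) h0)
    have hr : dot2 e (X - V) / det2 e (X - V) ≤ dot2 e (P - V) / det2 e (P - V) :=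
      hmax X hXT
    have hee : 0 < dot2 e e := dot2_self_pos e he
    have haP : dot2 e (P - V) = (dot2 e (P - V) / det2 e (P - V)) * det2 e (P - V) :=
      (div_mul_cancel₀ _ (ne_of_lt hbP)).symm
    have haX : dot2 e (X - V) = (dot2 e (X - V) / det2 e (X - V)) * det2 e (X - V) :=
      (div_mul_cancel₀ _ (ne_of_lt hbX)).symm
    have hid : det2 (P - V) (X - V) * dot2 e e =
        dot2 e (P - V) * det2 e (X - V) - det2 e (P - V) * dot2 e (X - V) := by
      simp only [det2, dot2, Prod.fst_sub, Prod.snd_sub]; ring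
    have hge : 0 ≤ det2 (P - V) (X - V) * dot2 e e := by
      rw [hid, haP, haX]
      have hbb : 0 < det2 e (P - V) * det2 e (X - V) := mul_pos_of_neg_of_neg hbP hbX
      nlinarith [mul_nonneg (le_of_lt hbb) (sub_nonneg.2 hr)]
    have h0le : 0 ≤ det2 (P - V) (X - V) := by nlinarith [hge, hee]
    have hpos : 0 < det2 (P - V) (X - V) := lt_of_le_of_ne h0le (Ne.symm hne0)
    exact Finset.mem_filter.2 ⟨hXS, hpos⟩
  have h1 : (T.erase P).card = T.card - 1 := Finset.card_erase_of_mem hPT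
  have h2 := Finset.card_le_card hsub
  omega

/-- If `Q, R` are both different from `V` and `QR` is halving with `V` strictly on
the positive side, we get a contradiction. -/
lemma aux_no_edge (S : Finset (ℝ × ℝ)) (hgp : GenPos S) (V : ℝ × ℝ) (hV : V ∈ S)
    (hstar : ∀ Q ∈ S, Q ≠ V → IsHalving S V Q) (Q R : ℝ × ℝ)
    (hQV : Q ≠ V) (hRV : R ≠ V) (h : IsHalving S Q R)
    (hd : 0 < det2 (R - Q) (V - Q)) : False := by
  classical
  obtain ⟨hQS, hRS, hQR, h1, h2⟩ := h
  set e := R - Q with hedef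
  have hlin : ∀ X : ℝ × ℝ, det2 e (X - V) = det2 e (X - Q) - det2 e (V - Q) := by
    intro X; simp only [det2, Prod.fst_sub, Prod.snd_sub]; ring
  set T := S.filter (fun X => det2 e (X - V) < 0) with hTdef
  set F := S.filter (fun X => det2 e (X - Q) < 0) with hFdef
  have hFcard : F.card = (S.card - 2) / 2 := by rw [← ncard_filter]; exact h2
  have hQT : Q ∈ T := by
    refine Finset.mem_filter.2 ⟨hQS, ?_⟩
    have hz : det2 e (Q - Q) = 0 := by simp [det2]
    rw [hlin Q, hz]; linarith
  have hRT : R ∈ T := by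
    refine Finset.mem_filter.2 ⟨hRS, ?_⟩
    rw [hlin R]
    have : det2 e (R - Q) = 0 := by simp only [hedef, det2]; ring
    rw [this]; linarith
  have hQF : Q ∉ F := by
    simp only [hFdef, Finset.mem_filter, not_and]
    intro _; simp only [sub_self, det2]; simp
  have hRF : R ∉ F := by
    simp only [hFdef, Finset.mem_filter, not_and]
    intro _
    have : det2 e (R - Q) = 0 := by simp only [hedef, det2]; ring
    rw [this]; exact lt_irrefl 0
  have hFT : F ⊆ T := by
    intro X hX
    have hXS : X ∈ S := (Finset.mem_filter.1 hX).1
    have hXF : det2 e (X - Q) < 0 := (Finset.mem_filter.1 hX).2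
    exact Finset.mem_filter.2 ⟨hXS, by rw [hlin X]; linarith⟩
  have hsub : insert Q (insert R F) ⊆ T := by
    intro X hX
    rcases Finset.mem_insert.1 hX with rfl | hX
    · exact hQT
    rcases Finset.mem_insert.1 hX with rfl | hX
    · exact hRT
    · exact hFT hX
  have hcard : (S.card - 2) / 2 + 2 ≤ T.card := by
    have hc1 : (insert Q (insert R F)).card = F.card + 2 := by
      rw [Finset.card_insert_of_notMem, Finset.card_insert_of_notMem hRF]
      simp only [Finset.mem_insert, not_or]
      exact ⟨hQR, hQF⟩
    have := Finset.card_le_card hsub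
    omega
  exact key_halfplane S hgp V hV hstar e (sub_ne_zero.2 (Ne.symm hQR)) (hTdef ▸ hcard)

/-- if some point `V` of `S` has degree `n - 1` in the underlying
graph (it is joined by halving lines to all other points), then the underlying
graph is the star `K_{1,n-1}`: every other point has `V` as its unique neighbor. -/
theorem stmt_8 (S : Finset (ℝ × ℝ)) (heven : Even S.card) (h4 : 4 ≤ S.card)
    (hgp : GenPos S) (V : ℝ × ℝ) (hV : V ∈ S)
    (hstar : ∀ Q ∈ S, Q ≠ V → IsHalving S V Q) :
    ∀ Q ∈ S, Q ≠ V → {R : ℝ × ℝ | IsHalving S Q R} = {V} := by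
  intro Q hQ hQV
  ext R
  simp only [Set.mem_setOf_eq, Set.mem_singleton_iff]
  constructor
  · intro h
    by_contra hRV
    have hRS : R ∈ S := h.2.1
    have hQR : Q ≠ R := h.2.2.1
    have hd : det2 (R - Q) (V - Q) ≠ 0 := by
      intro h0
      exact hgp Q hQ R hRS V hV hQR hQV hRV
        (collinear_of_det2 Q R V (sub_ne_zero.2 (Ne.symm hQR)) h0)
    rcases hd.lt_or_gt with hneg | hpos
    · refine aux_no_edge S hgp V hV hstar R Q hRV hQV (isHalving_symm h) ?_
      have : det2 (Q - R) (V - R) = - det2 (R - Q) (V - Q) := by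
        simp only [det2, Prod.fst_sub, Prod.snd_sub]; ring
      rw [this]; linarith
    · exact aux_no_edge S hgp V hV hstar Q R hQV hRV h hpos
  · rintro rfl
    exact isHalving_symm (hstar Q hQ hQV)
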